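/- (trace_of_bind) Traces compose under monadic bind: if trace_of t tr1 x and trace_of (k x) tr2 r, then trace_of (t >>= k) (tr1 ++ tr2) r. -/

import Mathlib

/-- The polynomial functor whose final coalgebra is the type of interaction trees. -/
def ITreePF (E : Type → Type) (R : Type) : PFunctor.{1} :=
  ⟨ULift.{1} R ⊕ (PUnit.{2} ⊕ Σ X : Type, E X),
   fun a =>
     match a with
     | Sum.inl _ => PEmpty.{2}
     | Sum.inr (Sum.inl _) => PUnit.{2}
     | Sum.inr (Sum.inr p) => ULift.{1} p.1⟩

/-- Interaction trees, defined coinductively as the M-type of `ITreePF`. -/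
def ITree (E : Type → Type) (R : Type) : Type 1 := PFunctor.M (ITreePF E R)

namespace ITree

variable {E : Type → Type} {R A B : Type}

/-- Pure value leaf. -/
def Ret (r : R) : ITree E R :=
  PFunctor.M.mk ⟨Sum.inl ⟨r⟩, fun e => e.elim⟩

/-- Silent step. -/
def Tau (t : ITree E R) : ITree E R :=
  PFunctor.M.mk ⟨Sum.inr (Sum.inl PUnit.unit), fun _ => t⟩

/-- Visible event with continuation. -/
def Vis {X : Type} (e : E X) (k : X → ITree E R) : ITree E R :=
  PFunctor.M.mk ⟨Sum.inr (Sum.inr ⟨X, e⟩), fun x => k x.down⟩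

/-- Monadic bind: replace every `Ret r` leaf of `t` by `k r`, by corecursion. -/
def bind (t : ITree E A) (k : A → ITree E B) : ITree E B :=
  PFunctor.M.corec
    (fun s : ITree E A ⊕ ITree E B =>
      match s with
      | Sum.inl t =>
        match PFunctor.M.dest t with
        | ⟨Sum.inl r, _⟩ =>
          let d := PFunctor.M.dest (k r.down)
          ⟨d.1, fun b => Sum.inr (d.2 b)⟩
        | ⟨Sum.inr (Sum.inl _), f⟩ =>
          ⟨Sum.inr (Sum.inl PUnit.unit), fun b => Sum.inl (f b)⟩
        | ⟨Sum.inr (Sum.inr p), f⟩ =>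
          ⟨Sum.inr (Sum.inr p), fun b => Sum.inl (f b)⟩
      | Sum.inr u =>
        let d := PFunctor.M.dest u
        ⟨d.1, fun b => Sum.inr (d.2 b)⟩)
    (Sum.inl t)

end ITree

/-- Governance events: a governance check named by a string, answered by a Bool. -/
inductive GovE : Type → Type where
  | GovCheck : String → GovE Bool

/-- The governed signature: governance checks plus I/O events. -/
def GovIOE (IOE : Type → Type) (X : Type) : Type := GovE X ⊕ IOE X

/-- One step of the `gov_safe` generating functor. -/
def govSafeF {IOE : Type → Type} {R : Type}
    (P : Bool → ITree (GovIOE IOE) R → Prop)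
    (a : Bool) (t : ITree (GovIOE IOE) R) : Prop :=
  (∃ r, t = ITree.Ret r) ∨
  (∃ t', t = ITree.Tau t' ∧ P a t') ∨
  (∃ (s : String) (k : Bool → ITree (GovIOE IOE) R),
      t = ITree.Vis (E := GovIOE IOE) (X := Bool) (Sum.inl (GovE.GovCheck s)) k ∧
      P true (k true) ∧ P false (k false)) ∨
  (∃ (X : Type) (e : IOE X) (k : X → ITree (GovIOE IOE) R),
      t = ITree.Vis (E := GovIOE IOE) (X := X) (Sum.inr e) k ∧ a = true ∧ ∀ x, P false (k x))

/-- `gov_safe a t`: greatest fixed point of `govSafeF`, i.e. `(a, t)` belongs to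
some postfixed point of the generating functor. -/
def gov_safe {IOE : Type → Type} {R : Type} (a : Bool) (t : ITree (GovIOE IOE) R) : Prop :=
  ∃ P : Bool → ITree (GovIOE IOE) R → Prop,
    (∀ a' t', P a' t' → govSafeF P a' t') ∧ P a t

/-- Trace events: governance checks (with outcome) and I/O events (by name). -/
inductive TraceEvent where
  | TE_GovCheck : String → Bool → TraceEvent
  | TE_IO : String → TraceEvent

/-- `trace_of ioName t tr r`: execution of `t` produces the finite trace `tr`
and returns `r`. -/
inductive trace_of {IOE : Type → Type} (ioName : ∀ X : Type, IOE X → String)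
    {R : Type} : ITree (GovIOE IOE) R → List TraceEvent → R → Prop where
  | ret (r : R) : trace_of ioName (ITree.Ret r) [] r
  | tau {t : ITree (GovIOE IOE) R} {tr : List TraceEvent} {r : R} :
      trace_of ioName t tr r → trace_of ioName (ITree.Tau t) tr r
  | gov {s : String} {k : Bool → ITree (GovIOE IOE) R} {b : Bool}
      {tr : List TraceEvent} {r : R} :
      trace_of ioName (k b) tr r →
      trace_of ioName (ITree.Vis (E := GovIOE IOE) (X := Bool) (Sum.inl (GovE.GovCheck s)) k)
        (TraceEvent.TE_GovCheck s b :: tr) r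
  | io {X : Type} {e : IOE X} {k : X → ITree (GovIOE IOE) R} {x : X}
      {tr : List TraceEvent} {r : R} :
      trace_of ioName (k x) tr r →
      trace_of ioName (ITree.Vis (E := GovIOE IOE) (X := X) (Sum.inr e) k)
        (TraceEvent.TE_IO (ioName X e) :: tr) r


namespace ITree

variable {E : Type → Type} {A B : Type}

/-- The corecursion step function used in `bind`. -/
def bindAux (k : A → ITree E B) :
    ITree E A ⊕ ITree E B → (ITreePF E B).Obj (ITree E A ⊕ ITree E B) :=
  fun s =>
    match s with
    | Sum.inl t =>
      match PFunctor.M.dest t with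
      | ⟨Sum.inl r, _⟩ =>
        let d := PFunctor.M.dest (k r.down)
        ⟨d.1, fun b => Sum.inr (d.2 b)⟩
      | ⟨Sum.inr (Sum.inl _), f⟩ =>
        ⟨Sum.inr (Sum.inl PUnit.unit), fun b => Sum.inl (f b)⟩
      | ⟨Sum.inr (Sum.inr p), f⟩ =>
        ⟨Sum.inr (Sum.inr p), fun b => Sum.inl (f b)⟩
    | Sum.inr u =>
      let d := PFunctor.M.dest u
      ⟨d.1, fun b => Sum.inr (d.2 b)⟩

lemma bind_def (t : ITree E A) (k : A → ITree E B) :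
    bind t k = PFunctor.M.corec (bindAux k) (Sum.inl t) := rfl

lemma copy_eq (k : A → ITree E B) (u : ITree E B) :
    PFunctor.M.corec (bindAux k) (Sum.inr u) = u := by
  apply PFunctor.M.bisim' (fun _ => True)
    (fun u : ITree E B => PFunctor.M.corec (bindAux k) (Sum.inr u)) id _ u trivial
  intro v _
  refine ⟨(PFunctor.M.dest v).1,
    fun b => PFunctor.M.corec (bindAux k) (Sum.inr ((PFunctor.M.dest v).2 b)),
    (PFunctor.M.dest v).2, ?_, rfl, ?_⟩
  · rw [PFunctor.M.dest_corec]; rfl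
  · intro i; exact ⟨(PFunctor.M.dest v).2 i, trivial, rfl, rfl⟩

lemma dest_inj {t u : ITree E A} (h : PFunctor.M.dest t = PFunctor.M.dest u) : t = u := by
  have := congrArg PFunctor.M.mk h
  exact (PFunctor.M.mk_dest t).symm.trans (this.trans (PFunctor.M.mk_dest u))

lemma bind_ret (r : A) (k : A → ITree E B) : bind (Ret r) k = k r := by
  apply dest_inj
  rw [bind_def, PFunctor.M.dest_corec]
  show PFunctor.map _ _ (bindAux k (Sum.inl (Ret r))) = _
  have hd : PFunctor.M.dest (Ret (E := E) r)
      = ⟨Sum.inl ⟨r⟩, fun e => e.elim⟩ := PFunctor.M.dest_mk _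
  simp only [bindAux, hd]
  show (⟨(PFunctor.M.dest (k r)).1,
      fun b => PFunctor.M.corec (bindAux k) (Sum.inr ((PFunctor.M.dest (k r)).2 b))⟩ :
      (ITreePF E B).Obj _) = _
  conv_rhs => rw [show PFunctor.M.dest (k r)
    = ⟨(PFunctor.M.dest (k r)).1, (PFunctor.M.dest (k r)).2⟩ from rfl]
  congr 1
  funext b
  exact copy_eq k _

lemma bind_tau (t : ITree E A) (k : A → ITree E B) :
    bind (Tau t) k = Tau (bind t k) := by
  apply dest_inj
  rw [bind_def, PFunctor.M.dest_corec]
  show PFunctor.map _ _ (bindAux k (Sum.inl (Tau t))) = _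
  have hd : PFunctor.M.dest (Tau t)
      = ⟨Sum.inr (Sum.inl PUnit.unit), fun _ => t⟩ := PFunctor.M.dest_mk _
  simp only [bindAux, hd]
  have hd2 : PFunctor.M.dest (Tau (bind t k))
      = ⟨Sum.inr (Sum.inl PUnit.unit), fun _ => bind t k⟩ := PFunctor.M.dest_mk _
  rw [hd2]
  rfl

lemma bind_vis {X : Type} (e : E X) (f : X → ITree E A) (k : A → ITree E B) :
    bind (Vis e f) k = Vis e (fun x => bind (f x) k) := by
  apply dest_inj
  rw [bind_def, PFunctor.M.dest_corec]
  show PFunctor.map _ _ (bindAux k (Sum.inl (Vis e f))) = _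
  have hd : PFunctor.M.dest (Vis e f)
      = ⟨Sum.inr (Sum.inr ⟨X, e⟩), fun x => f x.down⟩ := PFunctor.M.dest_mk _
  simp only [bindAux, hd]
  have hd2 : PFunctor.M.dest (Vis e (fun x => bind (f x) k))
      = ⟨Sum.inr (Sum.inr ⟨X, e⟩), fun x => bind (f x.down) k⟩ := PFunctor.M.dest_mk _
  rw [hd2]
  rfl

end ITree

/-- trace_of_bind: traces compose under monadic bind. -/
theorem trace_of_bind {IOE : Type → Type} (ioName : ∀ X : Type, IOE X → String)
    {A B : Type} (t : ITree (GovIOE IOE) A) (k : A → ITree (GovIOE IOE) B)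
    (tr1 tr2 : List TraceEvent) (x : A) (r : B)
    (h1 : trace_of ioName t tr1 x) (h2 : trace_of ioName (k x) tr2 r) :
    trace_of ioName (ITree.bind t k) (tr1 ++ tr2) r := by
  induction h1 with
  | ret r => rw [ITree.bind_ret]; exact h2
  | tau _ ih => rw [ITree.bind_tau]; exact (ih h2).tau
  | gov _ ih => exact (congrArg (fun z => trace_of ioName z _ r) (ITree.bind_vis _ _ k)).mpr (ih h2).gov
  | io _ ih => exact (congrArg (fun z => trace_of ioName z _ r) (ITree.bind_vis _ _ k)).mpr (ih h2).io
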